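/- Let c ∈ (−1,1), a = √((1+c)/2), let A11, A12, A13, A22, A23, A33 be real numbers, and set H12 = A11*A22 − A12², H13 = A11*A33 − A13², H23 = A22*A33 − A23², K = A11*A22*A33 + 2*A12*A13*A23 − A11*A23² − A22*A13² − A33*A12², and ρ = 2(H12 + H13 + H23) + 1 − c. Define D : ℝ → ℝ by D(l) = (1 − l*A11)·cos(a*l) + (−A22 + l*H12)·(sin(a*l)/a) + (−A33 + l*H13)·l·cos(a*l) + (H23 − l*K)·l·(sin(a*l)/a). Then D(0) = 1, D'(0) = −(A11 + A22 + A33), D''(0) = ρ − 3/2 + c/2, the fourth derivative of D at 0 equals −((1 + c)/4)·(−5 + 3c + 4ρ + 16·H13), and the sixth derivative of D at 0 equals ((1 + c)²/8)·(6ρ + 48·H13 + 5c − 7). -/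

import Mathlib

noncomputable def Fcs (a p0 p1 p2 q0 q1 q2 : ℝ) : ℝ → ℝ :=
  fun l => (p0 + p1*l + p2*l^2) * Real.cos (a*l)
    + (q0 + q1*l + q2*l^2) * (Real.sin (a*l)/a)

lemma Fcs_zero (a p0 p1 p2 q0 q1 q2 : ℝ) : Fcs a p0 p1 p2 q0 q1 q2 0 = p0 := by
  simp [Fcs]

lemma deriv_Fcs (a s : ℝ) (ha : a ≠ 0) (hs : a^2 = s) (p0 p1 p2 q0 q1 q2 : ℝ) :
    deriv (Fcs a p0 p1 p2 q0 q1 q2)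
      = Fcs a (p1 + q0) (2*p2 + q1) q2 (q1 - s*p0) (2*q2 - s*p1) (-(s*p2)) := by
  funext l
  have hal : HasDerivAt (fun l : ℝ => a*l) a l := by
    simpa using (hasDerivAt_id l).const_mul a
  have hcos : HasDerivAt (fun l : ℝ => Real.cos (a*l)) (-Real.sin (a*l) * a) l := hal.cos
  have hsin : HasDerivAt (fun l : ℝ => Real.sin (a*l)/a) (Real.cos (a*l) * a / a) l :=
    hal.sin.div_const a
  have hp : HasDerivAt (fun l : ℝ => p0 + p1*l + p2*l^2) (p1 + 2*p2*l) l := by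
    have := (((hasDerivAt_id l).const_mul p1).const_add p0).add
      ((hasDerivAt_pow 2 l).const_mul p2)
    exact this.congr_deriv (by norm_num; ring)
  have hq : HasDerivAt (fun l : ℝ => q0 + q1*l + q2*l^2) (q1 + 2*q2*l) l := by
    have := (((hasDerivAt_id l).const_mul q1).const_add q0).add
      ((hasDerivAt_pow 2 l).const_mul q2)
    exact this.congr_deriv (by norm_num; ring)
  have h := (hp.mul hcos).add (hq.mul hsin)
  have h2 : HasDerivAt (Fcs a p0 p1 p2 q0 q1 q2)
      ((p1 + 2*p2*l) * Real.cos (a*l) + (p0 + p1*l + p2*l^2) * (-Real.sin (a*l) * a)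
        + ((q1 + 2*q2*l) * (Real.sin (a*l)/a) + (q0 + q1*l + q2*l^2) * (Real.cos (a*l) * a / a))) l := h
  rw [h2.deriv, mul_div_assoc, div_self ha, mul_one]
  show _ = (_ : ℝ) * Real.cos (a*l) + (_ : ℝ) * (Real.sin (a*l)/a)
  field_simp
  rw [mul_comm l a]
  linear_combination (-(p0 + p1*l + p2*l^2) * Real.sin (a*l)) * hs

theorem detQ_derivs_S2xR2 (c : ℝ) (hc : c ∈ Set.Ioo (-1 : ℝ) 1)
    (a : ℝ) (ha : a = Real.sqrt ((1 + c)/2))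
    (A11 A12 A13 A22 A23 A33 H12 H13 H23 K ρ : ℝ)
    (hH12 : H12 = A11*A22 - A12^2)
    (hH13 : H13 = A11*A33 - A13^2)
    (hH23 : H23 = A22*A33 - A23^2)
    (hK : K = A11*A22*A33 + 2*A12*A13*A23 - A11*A23^2 - A22*A13^2 - A33*A12^2)
    (hρ : ρ = 2*(H12 + H13 + H23) + 1 - c)
    (D : ℝ → ℝ)
    (hD : ∀ l : ℝ, D l =
      (1 - l*A11) * Real.cos (a*l)
      + (-A22 + l*H12) * (Real.sin (a*l)/a)
      + (-A33 + l*H13) * l * Real.cos (a*l)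
      + (H23 - l*K) * l * (Real.sin (a*l)/a)) :
    D 0 = 1 ∧ deriv D 0 = -(A11 + A22 + A33) ∧
    iteratedDeriv 2 D 0 = ρ - 3/2 + c/2 ∧
    iteratedDeriv 4 D 0 = -((1 + c)/4) * (-5 + 3*c + 4*ρ + 16*H13) ∧
    iteratedDeriv 6 D 0 = ((1 + c)^2/8) * (6*ρ + 48*H13 + 5*c - 7) := by
  obtain ⟨hc1, hc2⟩ := hc
  have hspos : (0:ℝ) < (1 + c)/2 := by linarith
  have ha0 : a ≠ 0 := by
    rw [ha]; exact ne_of_gt (Real.sqrt_pos.mpr hspos)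
  have hs : a^2 = (1 + c)/2 := by
    rw [ha]; exact Real.sq_sqrt hspos.le
  have hDF : D = Fcs a 1 (-(A11+A33)) H13 (-A22) (H12+H23) (-K) := by
    funext l
    rw [hD]
    show _ = (_ : ℝ) * Real.cos (a*l) + (_ : ℝ) * (Real.sin (a*l)/a)
    ring
  have d1 := deriv_Fcs a ((1 + c)/2) ha0 hs 1 (-(A11+A33)) H13 (-A22) (H12+H23) (-K)
  rw [← hDF] at d1
  have d2 := (congrArg deriv d1).trans (deriv_Fcs a ((1 + c)/2) ha0 hs _ _ _ _ _ _)
  have d3 := (congrArg deriv d2).trans (deriv_Fcs a ((1 + c)/2) ha0 hs _ _ _ _ _ _)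
  have d4 := (congrArg deriv d3).trans (deriv_Fcs a ((1 + c)/2) ha0 hs _ _ _ _ _ _)
  have d5 := (congrArg deriv d4).trans (deriv_Fcs a ((1 + c)/2) ha0 hs _ _ _ _ _ _)
  have d6 := (congrArg deriv d5).trans (deriv_Fcs a ((1 + c)/2) ha0 hs _ _ _ _ _ _)
  refine ⟨?_, ?_, ?_, ?_, ?_⟩
  · rw [hDF, Fcs_zero]
  · rw [d1, Fcs_zero]; ring
  · show iteratedDeriv (1+1) D 0 = _
    rw [iteratedDeriv_succ, iteratedDeriv_one, d2, Fcs_zero]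
    subst hρ hH12 hH13 hH23; ring
  · show iteratedDeriv (1+1+1+1) D 0 = _
    rw [iteratedDeriv_succ, iteratedDeriv_succ,
      iteratedDeriv_succ, iteratedDeriv_one, d4, Fcs_zero]
    subst hρ hK hH12 hH13 hH23; ring
  · have h6 : iteratedDeriv 6 D = deriv (deriv (deriv (deriv (deriv (deriv D))))) := by
      simp only [show (6:ℕ) = 1+1+1+1+1+1 from rfl, iteratedDeriv_succ, iteratedDeriv_zero]
    rw [h6, d6, Fcs_zero]
    subst hρ hK hH12 hH13 hH23; ring
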